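/- arXiv:1212.6305 — 5 statements merged into one kernel-verified Lean document; each statement's English description precedes it below -/
import Mathlib

section
/- For every integer m ≥ 2, letting z = exp(3πi/(2m+1)), one has 𝒯_m(z) = 𝒯_{m+1}(z); moreover this common value equals sin(3mπ/(2m+1))/sin(3π/(2m+1)), which is a negative real number. -/
open Complex Real

/-- `𝒯_m(z) = z^{m-1} + z^{m-3} + ⋯ + z^{1-m}` for a natural number `m`. -/
noncomputable def calT (m : ℕ) (z : ℂ) : ℂ :=
  ∑ k ∈ Finset.range m, z ^ ((m : ℤ) - 1 - 2 * (k : ℤ))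

lemma exp_mul_I_sub (w : ℂ) :
    Complex.exp (w * Complex.I) - Complex.exp (-(w * Complex.I)) =
      2 * Complex.sin w * Complex.I := by
  rw [Complex.exp_mul_I, ← neg_mul, Complex.exp_mul_I, Complex.cos_neg, Complex.sin_neg]
  ring

lemma calT_exp (n : ℕ) (θ : ℝ) (h : Real.sin θ ≠ 0) :
    calT n (Complex.exp (θ * Complex.I)) =
      ((Real.sin (n * θ) / Real.sin θ : ℝ) : ℂ) := by
  set z := Complex.exp ((θ : ℂ) * Complex.I) with hz_def
  have hz : z ≠ 0 := Complex.exp_ne_zero _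
  have hzpow : ∀ a : ℤ, z ^ a = Complex.exp ((a : ℂ) * ((θ : ℂ) * Complex.I)) := by
    intro a
    rw [hz_def, ← Complex.exp_int_mul]
  have key : (z - z⁻¹) * calT n z = z ^ (n : ℤ) - z ^ (-(n : ℤ)) := by
    rw [calT, Finset.mul_sum]
    have hterm : ∀ k : ℕ, (z - z⁻¹) * z ^ ((n : ℤ) - 1 - 2 * (k : ℤ)) =
        (fun k : ℕ => z ^ ((n : ℤ) - 2 * (k : ℤ))) k -
        (fun k : ℕ => z ^ ((n : ℤ) - 2 * (k : ℤ))) (k + 1) := by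
      intro k
      simp only []
      have h1 : (n : ℤ) - 2 * (k : ℤ) = ((n : ℤ) - 1 - 2 * (k : ℤ)) + 1 := by ring
      have h2 : (n : ℤ) - 2 * ((k : ℤ) + 1) = ((n : ℤ) - 1 - 2 * (k : ℤ)) - 1 := by ring
      push_cast
      rw [h1, h2, zpow_add_one₀ hz, zpow_sub_one₀ hz, sub_mul]
      ring
    calc ∑ k ∈ Finset.range n, (z - z⁻¹) * z ^ ((n : ℤ) - 1 - 2 * (k : ℤ))
        = ∑ k ∈ Finset.range n, ((fun k : ℕ => z ^ ((n : ℤ) - 2 * (k : ℤ))) k -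
            (fun k : ℕ => z ^ ((n : ℤ) - 2 * (k : ℤ))) (k + 1)) :=
          Finset.sum_congr rfl fun k _ => hterm k
      _ = z ^ ((n : ℤ) - 2 * ((0 : ℕ) : ℤ)) - z ^ ((n : ℤ) - 2 * ((n : ℕ) : ℤ)) :=
          Finset.sum_range_sub' _ n
      _ = z ^ (n : ℤ) - z ^ (-(n : ℤ)) := by
          rw [show (n : ℤ) - 2 * ((0 : ℕ) : ℤ) = (n : ℤ) by norm_num,
            show (n : ℤ) - 2 * ((n : ℕ) : ℤ) = -(n : ℤ) by ring]
  have hd : z - z⁻¹ = 2 * ((Real.sin θ : ℂ)) * Complex.I := by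
    rw [hz_def, ← Complex.exp_neg, exp_mul_I_sub, Complex.ofReal_sin]
  have hnum : z ^ (n : ℤ) - z ^ (-(n : ℤ)) = 2 * ((Real.sin (n * θ) : ℂ)) * Complex.I := by
    rw [hzpow, hzpow]
    have e1 : ((n : ℤ) : ℂ) * ((θ : ℂ) * Complex.I) = ((n * θ : ℝ) : ℂ) * Complex.I := by
      push_cast; ring
    have e2 : ((-(n : ℤ) : ℤ) : ℂ) * ((θ : ℂ) * Complex.I) =
        -(((n * θ : ℝ) : ℂ) * Complex.I) := by push_cast; ring
    rw [e1, e2, exp_mul_I_sub, Complex.ofReal_sin]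
  have hI : (Complex.I : ℂ) ≠ 0 := Complex.I_ne_zero
  have hs : ((Real.sin θ : ℂ)) ≠ 0 := by exact_mod_cast Complex.ofReal_ne_zero.mpr h
  have hd0 : (2 * ((Real.sin θ : ℂ)) * Complex.I) ≠ 0 := by
    exact mul_ne_zero (mul_ne_zero two_ne_zero hs) hI
  rw [hd, hnum] at key
  have : calT n z = (2 * ((Real.sin (n * θ) : ℂ)) * Complex.I) /
      (2 * ((Real.sin θ : ℂ)) * Complex.I) := by
    rw [eq_div_iff hd0]
    linear_combination key
  rw [this, Complex.ofReal_div, mul_div_mul_right _ _ hI,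
    mul_div_mul_left _ _ (two_ne_zero (α := ℂ))]

theorem calT_eq_at_exp_three_pi_div (m : ℕ) (hm : 2 ≤ m) :
    calT m (Complex.exp (3 * (Real.pi : ℂ) * Complex.I / (2 * (m : ℂ) + 1))) =
      calT (m + 1) (Complex.exp (3 * (Real.pi : ℂ) * Complex.I / (2 * (m : ℂ) + 1))) ∧
    calT m (Complex.exp (3 * (Real.pi : ℂ) * Complex.I / (2 * (m : ℂ) + 1))) =
      ((Real.sin (3 * (m : ℝ) * Real.pi / (2 * (m : ℝ) + 1)) /
        Real.sin (3 * Real.pi / (2 * (m : ℝ) + 1)) : ℝ) : ℂ) ∧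
    Real.sin (3 * (m : ℝ) * Real.pi / (2 * (m : ℝ) + 1)) /
        Real.sin (3 * Real.pi / (2 * (m : ℝ) + 1)) < 0 := by
  have hm' : (2 : ℝ) ≤ (m : ℝ) := by exact_mod_cast hm
  have hden : (0 : ℝ) < 2 * (m : ℝ) + 1 := by linarith
  set θ : ℝ := 3 * Real.pi / (2 * (m : ℝ) + 1) with hθ
  have hθpos : 0 < θ := by
    rw [hθ]
    positivity
  have hθlt : θ < Real.pi := by
    rw [hθ, div_lt_iff₀ hden]
    nlinarith [Real.pi_pos]
  have hsθ : 0 < Real.sin θ := Real.sin_pos_of_pos_of_lt_pi hθpos hθlt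
  have hs : Real.sin θ ≠ 0 := ne_of_gt hsθ
  have hcast : 3 * (Real.pi : ℂ) * Complex.I / (2 * (m : ℂ) + 1) = (θ : ℂ) * Complex.I := by
    rw [hθ]
    push_cast
    ring
  have hmθ : (m : ℝ) * θ = 3 * (m : ℝ) * Real.pi / (2 * (m : ℝ) + 1) := by
    rw [hθ]; ring
  have hsin_eq : Real.sin (((m : ℕ) + 1 : ℕ) * θ) = Real.sin ((m : ℝ) * θ) := by
    have harg : (((m : ℕ) + 1 : ℕ) : ℝ) * θ = (Real.pi - (m : ℝ) * θ) + 2 * Real.pi := by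
      rw [hθ]
      push_cast
      field_simp
      ring
    rw [harg, Real.sin_add_two_pi, Real.sin_pi_sub]
  have h1 : Real.pi < (m : ℝ) * θ := by
    rw [hmθ, lt_div_iff₀ hden]
    nlinarith [Real.pi_pos]
  have h2 : (m : ℝ) * θ < 2 * Real.pi := by
    rw [hmθ, div_lt_iff₀ hden]
    nlinarith [Real.pi_pos]
  have hsneg : Real.sin ((m : ℝ) * θ) < 0 := by
    have := Real.sin_pos_of_pos_of_lt_pi (x := (m : ℝ) * θ - Real.pi) (by linarith) (by linarith)
    have hrw : Real.sin ((m : ℝ) * θ - Real.pi) = -Real.sin ((m : ℝ) * θ) := Real.sin_sub_pi _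
    linarith [hrw ▸ this]
  refine ⟨?_, ?_, ?_⟩
  · rw [hcast, calT_exp m θ hs, calT_exp (m + 1) θ hs]
    norm_cast
    rw [hsin_eq]
  · rw [hcast, calT_exp m θ hs, hmθ]
  · rw [← hmθ]
    exact div_neg_of_neg_of_pos hsneg hsθ
end

section
/- For every integer n with n ≥ 1 or n ≤ −2, and every real s > 0, there exists a real number T with s + 2 < T < s + 2 + 4/s such that φ_n(s,T) = 0; consequently there exists a real t > 1 with t + 1/t = T satisfying Riley's equation for the n-twist knot. -/
/-- Auxiliary Chebyshev-like sequence: `tauAux k 0 = 0`, `tauAux k 1 = 1`,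
`tauAux k (m+2) = k * tauAux k (m+1) - tauAux k m`. -/
def tauAux (k : ℝ) : ℕ → ℝ
  | 0 => 0
  | 1 => 1
  | (m + 2) => k * tauAux k (m + 1) - tauAux k m

/-- The two-sided sequence `τ_m` (`m ∈ ℤ`) determined by `τ_0 = 0`, `τ_1 = 1` and
`τ_{m+1} = (s² - (T-2)s + 2) τ_m - τ_{m-1}`; it satisfies `τ_{-m} = -τ_m`. -/
def tauZ (s T : ℝ) (m : ℤ) : ℝ :=
  if 0 ≤ m then tauAux (s ^ 2 - (T - 2) * s + 2) m.toNat
  else -tauAux (s ^ 2 - (T - 2) * s + 2) (-m).toNat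

/-- The Riley polynomial of the `n`-twist knot: `φ_n(s,T) = τ_{n+1} - (T - 1 - s) τ_n`. -/
def rileyPhi (n : ℤ) (s T : ℝ) : ℝ :=
  tauZ s T (n + 1) - (T - 1 - s) * tauZ s T n

lemma tauAux_sin (θ : ℝ) : ∀ m : ℕ, tauAux (2 * Real.cos θ) m * Real.sin θ = Real.sin (m * θ) := by
  intro m
  induction m using Nat.twoStepInduction with
  | zero => simp [tauAux]
  | one => simp [tauAux]
  | more m ih2 ih1 =>
    show (2 * Real.cos θ * tauAux _ (m+1) - tauAux _ m) * Real.sin θ = _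
    have e1 : ((m + 2 : ℕ) : ℝ) * θ = ((m+1 : ℕ) : ℝ) * θ + θ := by push_cast; ring
    have e2 : ((m : ℕ) : ℝ) * θ = ((m+1 : ℕ) : ℝ) * θ - θ := by push_cast; ring
    rw [sub_mul, mul_assoc, ih1, e1, Real.sin_add]
    rw [e2, Real.sin_sub] at ih2
    rw [ih2]; ring

lemma tauZ_sin (s T θ : ℝ) (hk : s ^ 2 - (T - 2) * s + 2 = 2 * Real.cos θ) (m : ℤ) :
    tauZ s T m * Real.sin θ = Real.sin ((m : ℝ) * θ) := by
  unfold tauZ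
  rw [hk]
  split_ifs with hm
  · rw [tauAux_sin]
    have : ((m.toNat : ℕ) : ℝ) = (m : ℝ) := by
      exact_mod_cast Int.toNat_of_nonneg hm
    rw [this]
  · have hm' : 0 ≤ -m := by omega
    rw [neg_mul, tauAux_sin]
    have : (((-m).toNat : ℕ) : ℝ) = -(m : ℝ) := by
      exact_mod_cast Int.toNat_of_nonneg hm'
    rw [this, neg_mul, Real.sin_neg, neg_neg]

set_option maxHeartbeats 1000000 in
theorem riley_root_exists (n : ℤ) (hn : 1 ≤ n ∨ n ≤ -2) (s : ℝ) (hs : 0 < s) :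
    ∃ T : ℝ, s + 2 < T ∧ T < s + 2 + 4 / s ∧ rileyPhi n s T = 0 ∧
      ∃ t : ℝ, 1 < t ∧ t + 1 / t = T := by
  have hπ := Real.pi_pos
  set c : ℝ := 2 * (n : ℝ) + 1 with hc
  set q : ℝ := |c| with hqdef
  have hncases : ((1 : ℝ) ≤ (n : ℝ)) ∨ ((n : ℝ) ≤ -2) := by
    rcases hn with h | h
    · left; exact_mod_cast h
    · right; exact_mod_cast h
  have hq3 : 3 ≤ q := by
    rcases hncases with h | h
    · rw [hqdef, abs_of_pos (by rw [hc]; linarith)]; rw [hc]; linarith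
    · rw [hqdef, abs_of_neg (by rw [hc]; linarith)]; rw [hc]; linarith
  have hq0 : 0 < q := by linarith
  set θb : ℝ := 2 * Real.pi / q with hθb
  have hθb_pos : 0 < θb := by positivity
  have hθb_lt : θb ≤ 2 * Real.pi / 3 := by rw [hθb]; gcongr
  have hθb_lt_pi : θb < Real.pi := by
    calc θb ≤ 2 * Real.pi / 3 := hθb_lt
    _ < Real.pi := by linarith
  set h : ℝ → ℝ := fun θ =>
    Real.cos (c * θ / 2) - 2 / s * Real.sin (θ / 2) * Real.sin ((n : ℝ) * θ) with hh
  have hcont : Continuous h := by rw [hh]; fun_prop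
  have h0 : h 0 = 1 := by simp [hh]
  have hsinpq : 0 < Real.sin (Real.pi / q) := by
    apply Real.sin_pos_of_pos_of_lt_pi
    · positivity
    · rw [div_lt_iff₀ hq0]; nlinarith
  have hcosθb : Real.cos (c * θb / 2) = -1 := by
    have heq : c * θb / 2 = (c / q) * Real.pi := by rw [hθb]; field_simp
    rw [heq]
    rcases hncases with hcase | hcase
    · have : c / q = 1 := by
        rw [hqdef, abs_of_pos (by rw [hc]; linarith), div_self (by rw [hc]; intro hz; nlinarith)]
      rw [this, one_mul, Real.cos_pi]
    · have : c / q = -1 := by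
        rw [hqdef, abs_of_neg (by rw [hc]; linarith)]
        have hc0 : c ≠ 0 := by rw [hc]; intro hz; nlinarith
        field_simp
      rw [this, neg_one_mul, Real.cos_neg, Real.cos_pi]
  have hsinnθb : Real.sin ((n : ℝ) * θb) = Real.sin (Real.pi / q) := by
    rcases hncases with hcase | hcase
    · have hqc : q = c := by rw [hqdef, abs_of_pos (by rw [hc]; linarith)]
      have heq : (n : ℝ) * θb = Real.pi - Real.pi / q := by
        have hqne : q ≠ 0 := ne_of_gt hq0
        rw [hθb]; field_simp; rw [hqc, hc]; ring
      rw [heq, Real.sin_pi_sub]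
    · have hqc : q = -c := by rw [hqdef, abs_of_neg (by rw [hc]; linarith)]
      have hc0 : c ≠ 0 := by rw [hc]; intro hz; nlinarith
      have heq : (n : ℝ) * θb = -(Real.pi + Real.pi / q) := by
        have hqne : q ≠ 0 := ne_of_gt hq0
        rw [hθb]; field_simp; rw [hqc, hc]; ring
      rw [heq, Real.sin_neg, Real.sin_add, Real.sin_pi, Real.cos_pi]; ring
  have hθb_neg : h θb < 0 := by
    have hsinθb2 : Real.sin (θb / 2) = Real.sin (Real.pi / q) := by
      rw [hθb]; ring_nf
    rw [hh]; simp only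
    rw [hcosθb, hsinnθb, hsinθb2]
    have : 0 < 2 / s * Real.sin (Real.pi / q) * Real.sin (Real.pi / q) := by positivity
    linarith
  -- intermediate value theorem
  obtain ⟨θ, hθmem, hθroot⟩ : ∃ θ ∈ Set.Icc 0 θb, h θ = 0 := by
    have hsub := intermediate_value_Icc' (le_of_lt hθb_pos) hcont.continuousOn
    have h0mem : (0 : ℝ) ∈ Set.Icc (h θb) (h 0) := by
      constructor
      · linarith
      · rw [h0]; norm_num
    obtain ⟨θ, hθ, hθ0⟩ := hsub h0mem
    exact ⟨θ, hθ, hθ0⟩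
  have hθpos : 0 < θ := by
    rcases lt_or_eq_of_le hθmem.1 with hlt | heq
    · exact hlt
    · exfalso; rw [← heq, h0] at hθroot; norm_num at hθroot
  have hθltθb : θ < θb := by
    rcases lt_or_eq_of_le hθmem.2 with hlt | heq
    · exact hlt
    · exfalso; rw [heq] at hθroot; linarith
  have hθlt_pi : θ < Real.pi := lt_trans hθltθb hθb_lt_pi
  have hsinθ : 0 < Real.sin θ := Real.sin_pos_of_pos_of_lt_pi hθpos hθlt_pi
  have hsinθ2 : 0 < Real.sin (θ / 2) :=
    Real.sin_pos_of_pos_of_lt_pi (by linarith) (by linarith)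
  have hcosθ2 : 0 < Real.cos (θ / 2) := by
    apply Real.cos_pos_of_mem_Ioo
    constructor
    · linarith
    · have : θ < 2 * Real.pi / 3 := lt_of_lt_of_le hθltθb hθb_lt
      linarith
  have hcosθ_sin : Real.cos θ = 1 - 2 * Real.sin (θ / 2) ^ 2 := by
    have h1 : Real.cos (2 * (θ / 2)) = 2 * Real.cos (θ / 2) ^ 2 - 1 := Real.cos_two_mul _
    have h2 := Real.sin_sq_add_cos_sq (θ / 2)
    have h3 : (2 : ℝ) * (θ / 2) = θ := by ring
    rw [h3] at h1; nlinarith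
  have hcosθ_lt : Real.cos θ < 1 := by nlinarith [mul_pos hsinθ2 hsinθ2]
  have hcosθ_gt : -1 < Real.cos θ := by
    have h1 : Real.cos (2 * (θ / 2)) = 2 * Real.cos (θ / 2) ^ 2 - 1 := Real.cos_two_mul _
    have h3 : (2 : ℝ) * (θ / 2) = θ := by ring
    rw [h3] at h1; nlinarith [mul_pos hcosθ2 hcosθ2]
  set T : ℝ := s + 2 + 2 * (1 - Real.cos θ) / s with hT
  have hTlow : 0 < 2 * (1 - Real.cos θ) / s := div_pos (by linarith) hs
  have hThigh : 2 * (1 - Real.cos θ) / s < 4 / s := by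
    rw [div_lt_div_iff₀ hs hs]; nlinarith
  refine ⟨T, by rw [hT]; linarith, by rw [hT]; linarith, ?_, ?_⟩
  · -- rileyPhi vanishes
    have hk : s ^ 2 - (T - 2) * s + 2 = 2 * Real.cos θ := by
      rw [hT]; field_simp; ring
    have ht1 := tauZ_sin s T θ hk (n + 1)
    have ht2 := tauZ_sin s T θ hk n
    have key : rileyPhi n s T * Real.sin θ = 0 := by
      unfold rileyPhi
      rw [sub_mul, mul_assoc, ht2]
      push_cast at ht1
      rw [ht1]
      have hTval : T - 1 - s = 1 + 4 / s * Real.sin (θ / 2) ^ 2 := by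
        rw [hT, hcosθ_sin]; field_simp; ring
      have hroot : Real.cos (c * θ / 2) - 2 / s * Real.sin (θ / 2) * Real.sin ((n : ℝ) * θ) = 0 := by
        simpa only [hh] using hθroot
      have e1 : ((n : ℝ) + 1) * θ = c * θ / 2 + θ / 2 := by rw [hc]; ring
      have e2 : (n : ℝ) * θ = c * θ / 2 - θ / 2 := by rw [hc]; ring
      rw [e2, Real.sin_sub] at hroot
      rw [hTval, e1, e2, Real.sin_add, Real.sin_sub]
      linear_combination 2 * Real.sin (θ / 2) * hroot
    exact (mul_eq_zero.mp key).resolve_right (ne_of_gt hsinθ)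
  · -- existence of t
    have hT2 : 2 < T := by rw [hT]; linarith
    set d : ℝ := Real.sqrt (T ^ 2 - 4) with hd
    have hd2 : d ^ 2 = T ^ 2 - 4 := Real.sq_sqrt (by nlinarith)
    have hd0 : 0 ≤ d := Real.sqrt_nonneg _
    refine ⟨(T + d) / 2, by nlinarith, ?_⟩
    have htpos : (0 : ℝ) < (T + d) / 2 := by nlinarith
    field_simp
    nlinarith [hd2]
end

section
/- Let n be an integer with n > 1 and set c = 2 − 2cos(π/(2n+1)) and c′ = 2 − 2cos(3π/(2n+1)), so that 0 < c < c′ < 4. Then for every real s > 0 there exists a real number T with s + 2 + c/s < T < s + 2 + c′/s such that φ_n(s,T) = 0. -/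
lemma tau_sin (θ : ℝ) : ∀ m : ℕ,
    Real.sin θ * tauAux (2 * Real.cos θ) m = Real.sin (m * θ)
  | 0 => by simp [tauAux]
  | 1 => by simp [tauAux]
  | (m + 2) => by
      have ih1 := tau_sin θ (m + 1)
      have ih0 := tau_sin θ m
      have h2 : Real.sin (((m:ℕ) + 2 : ℕ) * θ)
          = Real.sin (((m:ℕ)+1:ℕ) * θ) * Real.cos θ + Real.cos (((m:ℕ)+1:ℕ)*θ) * Real.sin θ := by
        rw [← Real.sin_add]; congr 1; push_cast; ring
      have h0 : Real.sin ((m:ℕ) * θ)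
          = Real.sin (((m:ℕ)+1:ℕ) * θ) * Real.cos θ - Real.cos (((m:ℕ)+1:ℕ)*θ) * Real.sin θ := by
        rw [← Real.sin_sub]; congr 1; push_cast; ring
      rw [tauAux, h2]
      linear_combination (2 * Real.cos θ) * ih1 - ih0 - h0

lemma continuous_tauAux (m : ℕ) : Continuous fun k : ℝ => tauAux k m := by
  induction m using Nat.twoStepInduction with
  | zero => simpa [tauAux] using continuous_const
  | one => simpa [tauAux] using continuous_const
  | more m ih0 ih1 =>
      show Continuous fun k : ℝ => k * tauAux k (m + 1) - tauAux k m
      exact (continuous_id.mul ih1).sub ih0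

lemma phi_eval (n : ℤ) (hn : 0 ≤ n) (s θ : ℝ) (hs : s ≠ 0) :
    Real.sin θ * rileyPhi n s (s + 2 + (2 - 2 * Real.cos θ) / s) =
      Real.sin (((n:ℝ) + 1) * θ)
        - (1 + (2 - 2 * Real.cos θ) / s) * Real.sin ((n:ℝ) * θ) := by
  set T := s + 2 + (2 - 2 * Real.cos θ) / s with hT
  have hk : s ^ 2 - (T - 2) * s + 2 = 2 * Real.cos θ := by
    rw [hT]; field_simp; ring
  have h01 : (0:ℤ) ≤ n + 1 := by omega
  have htn : ((n + 1 : ℤ)).toNat = n.toNat + 1 := by omega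
  have hcast : ((n.toNat : ℕ) : ℝ) = (n : ℝ) := by exact_mod_cast Int.toNat_of_nonneg hn
  have hT1 : T - 1 - s = 1 + (2 - 2 * Real.cos θ) / s := by rw [hT]; ring
  rw [rileyPhi, tauZ, tauZ, if_pos h01, if_pos hn, htn, hk, hT1]
  have e1 := tau_sin θ (n.toNat + 1)
  have e0 := tau_sin θ n.toNat
  rw [show (((n.toNat + 1 : ℕ)) : ℝ) = (n:ℝ) + 1 by push_cast [hcast]; ring] at e1
  rw [hcast] at e0
  linear_combination e1 - (1 + (2 - 2 * Real.cos θ) / s) * e0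

theorem riley_root_exists_pos_twist (n : ℤ) (hn : 1 < n) :
    0 < 2 - 2 * Real.cos (Real.pi / (2 * (n : ℝ) + 1)) ∧
    2 - 2 * Real.cos (Real.pi / (2 * (n : ℝ) + 1)) <
      2 - 2 * Real.cos (3 * Real.pi / (2 * (n : ℝ) + 1)) ∧
    2 - 2 * Real.cos (3 * Real.pi / (2 * (n : ℝ) + 1)) < 4 ∧
    ∀ s : ℝ, 0 < s → ∃ T : ℝ,
      s + 2 + (2 - 2 * Real.cos (Real.pi / (2 * (n : ℝ) + 1))) / s < T ∧
      T < s + 2 + (2 - 2 * Real.cos (3 * Real.pi / (2 * (n : ℝ) + 1))) / s ∧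
      rileyPhi n s T = 0 := by
  have hN : (2:ℝ) ≤ (n:ℝ) := by exact_mod_cast hn
  have hpi := Real.pi_pos
  have hdpos : (0:ℝ) < 2 * (n:ℝ) + 1 := by linarith
  set N : ℝ := (n:ℝ) with hNdef
  set θ₁ : ℝ := Real.pi / (2 * N + 1) with hθ₁def
  set θ₂ : ℝ := 3 * Real.pi / (2 * N + 1) with hθ₂def
  have hθ₁pos : 0 < θ₁ := div_pos hpi hdpos
  have hθ₂pos : 0 < θ₂ := div_pos (by linarith) hdpos
  have hθ₁₂ : θ₁ < θ₂ := by
    rw [hθ₁def, hθ₂def, div_lt_div_iff₀ hdpos hdpos]; nlinarith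
  have hθ₂π : θ₂ < Real.pi := by
    rw [hθ₂def, div_lt_iff₀ hdpos]; nlinarith
  have hc1 : Real.cos θ₁ < 1 := by
    have := Real.cos_lt_cos_of_nonneg_of_le_pi (le_refl 0) (by linarith) hθ₁pos
    rwa [Real.cos_zero] at this
  have hc12 : Real.cos θ₂ < Real.cos θ₁ :=
    Real.cos_lt_cos_of_nonneg_of_le_pi (le_of_lt hθ₁pos) (le_of_lt hθ₂π) hθ₁₂
  have hc2 : -1 < Real.cos θ₂ := by
    have := Real.cos_lt_cos_of_nonneg_of_le_pi (le_of_lt hθ₂pos) (le_refl Real.pi) hθ₂π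
    rwa [Real.cos_pi] at this
  refine ⟨by linarith, by linarith, by linarith, ?_⟩
  intro s hs
  have hs' : s ≠ 0 := ne_of_gt hs
  set c₁ : ℝ := 2 - 2 * Real.cos θ₁ with hc₁def
  set c₂ : ℝ := 2 - 2 * Real.cos θ₂ with hc₂def
  have hc₁pos : 0 < c₁ := by rw [hc₁def]; linarith
  have hc₂pos : 0 < c₂ := by rw [hc₂def]; linarith
  set T₁ : ℝ := s + 2 + c₁ / s with hT₁def
  set T₂ : ℝ := s + 2 + c₂ / s with hT₂def
  have hT12 : T₁ < T₂ := by
    have h : c₁ / s < c₂ / s :=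
      (div_lt_div_iff_of_pos_right hs).mpr (by rw [hc₁def, hc₂def]; linarith)
    rw [hT₁def, hT₂def]; linarith
  -- sines at the relevant points
  have hsin1 : 0 < Real.sin θ₁ := Real.sin_pos_of_pos_of_lt_pi hθ₁pos (lt_trans hθ₁₂ hθ₂π)
  have hsin2 : 0 < Real.sin θ₂ := Real.sin_pos_of_pos_of_lt_pi hθ₂pos hθ₂π
  have hN1 : N * θ₁ < Real.pi := by
    rw [hθ₁def, mul_div_assoc', div_lt_iff₀ hdpos]; nlinarith
  have hsinN1 : 0 < Real.sin (N * θ₁) :=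
    Real.sin_pos_of_pos_of_lt_pi (by positivity) hN1
  have hN2lo : Real.pi < N * θ₂ := by
    rw [hθ₂def, mul_div_assoc', lt_div_iff₀ hdpos]; nlinarith
  have hN2hi : N * θ₂ < 2 * Real.pi := by
    rw [hθ₂def, mul_div_assoc', div_lt_iff₀ hdpos]; nlinarith
  have hsinN2 : Real.sin (N * θ₂) < 0 := by
    have h := Real.sin_add_pi (N * θ₂ - Real.pi)
    rw [show N * θ₂ - Real.pi + Real.pi = N * θ₂ by ring] at h
    have : 0 < Real.sin (N * θ₂ - Real.pi) :=
      Real.sin_pos_of_pos_of_lt_pi (by linarith) (by linarith)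
    linarith [h]
  -- evaluations
  have hev1 : Real.sin θ₁ * rileyPhi n s T₁ = -(c₁ / s) * Real.sin (N * θ₁) := by
    have h := phi_eval n (by omega) s θ₁ hs'
    rw [← hc₁def, ← hT₁def, ← hNdef] at h
    rw [show (N + 1) * θ₁ = Real.pi - N * θ₁ by
      rw [hθ₁def]; field_simp; ring, Real.sin_pi_sub] at h
    rw [h]; ring
  have hev2 : Real.sin θ₂ * rileyPhi n s T₂ = -(c₂ / s) * Real.sin (N * θ₂) := by
    have h := phi_eval n (by omega) s θ₂ hs'
    rw [← hc₂def, ← hT₂def, ← hNdef] at h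
    rw [show (N + 1) * θ₂ = (Real.pi - N * θ₂) + 2 * Real.pi by
      rw [hθ₂def]; field_simp; ring, Real.sin_add_two_pi, Real.sin_pi_sub] at h
    rw [h]; ring
  have hf1 : rileyPhi n s T₁ < 0 := by
    have h2 : Real.sin θ₁ * rileyPhi n s T₁ < 0 := by
      rw [hev1]
      have h3 : 0 < c₁ / s := div_pos hc₁pos hs
      exact mul_neg_of_neg_of_pos (by linarith) hsinN1
    have h4 := div_neg_of_neg_of_pos h2 hsin1
    rwa [mul_div_cancel_left₀ _ (ne_of_gt hsin1)] at h4
  have hf2 : 0 < rileyPhi n s T₂ := by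
    have h2 : 0 < Real.sin θ₂ * rileyPhi n s T₂ := by
      rw [hev2]
      have h3 : 0 < c₂ / s := div_pos hc₂pos hs
      exact mul_pos_of_neg_of_neg (by linarith) hsinN2
    have h4 := div_pos h2 hsin2
    rwa [mul_div_cancel_left₀ _ (ne_of_gt hsin2)] at h4
  -- continuity
  have hfc : Continuous fun T : ℝ => rileyPhi n s T := by
    have heq : (fun T : ℝ => rileyPhi n s T) = fun T : ℝ =>
        tauAux (s ^ 2 - (T - 2) * s + 2) (n.toNat + 1)
          - (T - 1 - s) * tauAux (s ^ 2 - (T - 2) * s + 2) n.toNat := by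
      funext T
      have h01 : (0:ℤ) ≤ n + 1 := by omega
      have h0 : (0:ℤ) ≤ n := by omega
      have htn : ((n + 1 : ℤ)).toNat = n.toNat + 1 := by omega
      rw [rileyPhi, tauZ, tauZ, if_pos h01, if_pos h0, htn]
    rw [heq]
    have hk : Continuous fun T : ℝ => s ^ 2 - (T - 2) * s + 2 :=
      (continuous_const.sub ((continuous_id.sub continuous_const).mul
        continuous_const)).add continuous_const
    have hl : Continuous fun T : ℝ => T - 1 - s :=
      (continuous_id.sub continuous_const).sub continuous_const
    exact ((continuous_tauAux _).comp hk).sub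
      (hl.mul ((continuous_tauAux _).comp hk))
  have hmem : (0:ℝ) ∈ Set.Ioo (rileyPhi n s T₁) (rileyPhi n s T₂) := ⟨hf1, hf2⟩
  obtain ⟨T, hTmem, hfT⟩ :=
    intermediate_value_Ioo (le_of_lt hT12) hfc.continuousOn hmem
  exact ⟨T, hTmem.1, hTmem.2, hfT⟩
end

section
/- For n = −2, for every real s > 0 there exists a real number T with s + 2 + 1/s < T < s + 2 + 2/s such that φ_{−2}(s,T) = 0, i.e., (T − 1 − s)(s² − (T−2)s + 2) = 1; indeed, Φ(T) = −1 + (T−1−s)(s² − (T−2)s + 2) satisfies Φ(s+2+1/s) = 1/s > 0 and Φ(s+2+2/s) = −1 < 0. -/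
lemma rileyPhi_neg_two (s T : ℝ) :
    rileyPhi (-2) s T = -1 + (T - 1 - s) * (s ^ 2 - (T - 2) * s + 2) := by
  have h1 : tauZ s T (-1) = -1 := by
    simp only [tauZ]
    norm_num [tauAux]
  have h2 : tauZ s T (-2) = -(s ^ 2 - (T - 2) * s + 2) := by
    simp only [tauZ]
    norm_num [tauAux, show Int.toNat 2 = 2 from rfl]
  show tauZ s T (-2 + 1) - _ = _
  norm_num [h1, h2]; ring

theorem riley_root_exists_neg_two (s : ℝ) (hs : 0 < s) :
    (∃ T : ℝ, s + 2 + 1 / s < T ∧ T < s + 2 + 2 / s ∧ rileyPhi (-2) s T = 0 ∧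
      (T - 1 - s) * (s ^ 2 - (T - 2) * s + 2) = 1) ∧
    -1 + ((s + 2 + 1 / s) - 1 - s) * (s ^ 2 - ((s + 2 + 1 / s) - 2) * s + 2) = 1 / s ∧
    0 < 1 / s ∧
    -1 + ((s + 2 + 2 / s) - 1 - s) * (s ^ 2 - ((s + 2 + 2 / s) - 2) * s + 2) = -1 := by
  have hs' : s ≠ 0 := ne_of_gt hs
  set f : ℝ → ℝ := fun T => -1 + (T - 1 - s) * (s ^ 2 - (T - 2) * s + 2) with hf
  set a := s + 2 + 1 / s with ha
  set b := s + 2 + 2 / s with hb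
  have hfa : f a = 1 / s := by simp only [hf, ha]; field_simp; ring
  have hfb : f b = -1 := by simp only [hf, hb]; field_simp; ring
  have hab : a ≤ b := by
    have : 1 / s < 2 / s := by gcongr <;> norm_num
    rw [ha, hb]; linarith
  have hcont : ContinuousOn f (Set.Icc a b) := by fun_prop
  have hmem : (0 : ℝ) ∈ Set.Ioo (f b) (f a) := by
    rw [hfa, hfb]; constructor
    · norm_num
    · positivity
  obtain ⟨T, hT, hfT⟩ := intermediate_value_Ioo' hab hcont hmem
  refine ⟨⟨T, hT.1, hT.2, ?_, ?_⟩, hfa, by positivity, hfb⟩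
  · rw [rileyPhi_neg_two]; exact hfT
  · have : -1 + (T - 1 - s) * (s ^ 2 - (T - 2) * s + 2) = 0 := hfT
    linarith
end

section
/- Let c > 0 be a constant and let t : (0,∞) → (1,∞) be a continuous function such that s + 2 + c/s < t(s) + 1/t(s) < s + 2 + 4/s for all s > 0. Define B(s) = (t(s) − s − 1)/(−1 + (1 + s)t(s)) (which is positive) and g(s) = −log B(s) / log √(t(s)). Then g(s) → 0 as s → 0⁺, g(s) → 4 as s → ∞, and consequently the image of g contains the open interval (0, 4). -/
open Filter

private lemma log_mono_aux {x y : ℝ} (hx : 0 < x) (h : x ≤ y) :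
    Real.log x ≤ Real.log y := by
  gcongr

theorem g_image_contains_Ioo (c : ℝ) (hc : 0 < c) (t : ℝ → ℝ)
    (htcont : ContinuousOn t (Set.Ioi 0))
    (ht : ∀ s : ℝ, 0 < s → 1 < t s)
    (hlow : ∀ s : ℝ, 0 < s → s + 2 + c / s < t s + 1 / t s)
    (hhigh : ∀ s : ℝ, 0 < s → t s + 1 / t s < s + 2 + 4 / s)
    (B g : ℝ → ℝ)
    (hB : ∀ s : ℝ, B s = (t s - s - 1) / (-1 + (1 + s) * t s))
    (hg : ∀ s : ℝ, g s = -Real.log (B s) / Real.log (Real.sqrt (t s))) :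
    (∀ s : ℝ, 0 < s → 0 < B s) ∧
    Tendsto g (nhdsWithin 0 (Set.Ioi 0)) (nhds 0) ∧
    Tendsto g atTop (nhds 4) ∧
    Set.Ioo (0 : ℝ) 4 ⊆ g '' Set.Ioi 0 := by
  have htpos : ∀ s : ℝ, 0 < s → 0 < t s := fun s hs => zero_lt_one.trans (ht s hs)
  have hts1 : ∀ s : ℝ, 0 < s → s + 1 < t s := by
    intro s hs
    have h1 := ht s hs
    have h2 := hlow s hs
    have htp : (0:ℝ) < t s := by linarith
    have hinv : 1 / t s < 1 := by rw [div_lt_one htp]; exact h1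
    have hcs : 0 < c / s := div_pos hc hs
    linarith
  have hnum : ∀ s : ℝ, 0 < s → 0 < t s - s - 1 := fun s hs => by linarith [hts1 s hs]
  have hden : ∀ s : ℝ, 0 < s → 0 < -1 + (1 + s) * t s := by
    intro s hs
    nlinarith [mul_pos hs (htpos s hs), ht s hs]
  have hBpos : ∀ s : ℝ, 0 < s → 0 < B s := by
    intro s hs; rw [hB s]; exact div_pos (hnum s hs) (hden s hs)
  -- limit at 0⁺
  have htinf0 : Tendsto t (nhdsWithin 0 (Set.Ioi 0)) atTop := by
    have hb : Tendsto (fun s : ℝ => c * s⁻¹) (nhdsWithin 0 (Set.Ioi 0)) atTop :=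
      Tendsto.const_mul_atTop hc tendsto_inv_nhdsGT_zero
    refine tendsto_atTop_mono' _ ?_ hb
    filter_upwards [self_mem_nhdsWithin] with s hs
    have hs0 : (0:ℝ) < s := hs
    have h1 := ht s hs0
    have h2 := hlow s hs0
    have htp : (0:ℝ) < t s := by linarith
    have hinv : 1 / t s < 1 := by rw [div_lt_one htp]; exact h1
    have he : c * s⁻¹ = c / s := by rw [div_eq_mul_inv]
    rw [he]
    linarith
  have hinvt0 : Tendsto (fun s => (t s)⁻¹) (nhdsWithin 0 (Set.Ioi 0)) (nhds 0) :=
    tendsto_inv_atTop_zero.comp htinf0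
  have hid0 : Tendsto (fun s : ℝ => s) (nhdsWithin 0 (Set.Ioi 0)) (nhds 0) :=
    tendsto_id.mono_left nhdsWithin_le_nhds
  have hB1 : Tendsto B (nhdsWithin 0 (Set.Ioi 0)) (nhds 1) := by
    have hnumlim : Tendsto (fun s : ℝ => 1 - (s + 1) * (t s)⁻¹)
        (nhdsWithin 0 (Set.Ioi 0)) (nhds (1 - (0 + 1) * 0)) :=
      Tendsto.sub tendsto_const_nhds ((hid0.add tendsto_const_nhds).mul hinvt0)
    have hdenlim : Tendsto (fun s : ℝ => (1 + s) - (t s)⁻¹)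
        (nhdsWithin 0 (Set.Ioi 0)) (nhds ((1 + 0) - 0)) :=
      Tendsto.sub (tendsto_const_nhds.add hid0) hinvt0
    have hlim := hnumlim.div hdenlim (by norm_num : ((1:ℝ) + 0) - 0 ≠ 0)
    norm_num at hlim
    refine Tendsto.congr' ?_ hlim
    filter_upwards [self_mem_nhdsWithin] with s hs
    have hs0 : (0:ℝ) < s := hs
    have htp := htpos s hs0
    have hd := hden s hs0
    have hinv1 : (t s)⁻¹ < 1 := by
      rw [inv_lt_one_iff₀]; right; exact ht s hs0
    have hd2 : (0:ℝ) < (1 + s) - (t s)⁻¹ := by linarith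
    simp only [Pi.div_apply]
    rw [hB s, div_eq_div_iff hd2.ne' hd.ne']
    field_simp
    ring
  have hlogB0 : Tendsto (fun s => Real.log (B s)) (nhdsWithin 0 (Set.Ioi 0)) (nhds 0) := by
    have h := (Real.continuousAt_log one_ne_zero).tendsto.comp hB1
    simpa [Function.comp_def] using h
  have hlogs0 : Tendsto (fun s => Real.log (Real.sqrt (t s)))
      (nhdsWithin 0 (Set.Ioi 0)) atTop := by
    have h2 : Tendsto (fun s => Real.log (t s) / 2) (nhdsWithin 0 (Set.Ioi 0)) atTop :=
      (Real.tendsto_log_atTop.comp htinf0).atTop_div_const two_pos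
    refine Tendsto.congr' ?_ h2
    filter_upwards [self_mem_nhdsWithin] with s hs
    rw [Real.log_sqrt (htpos s hs).le]
  have hg0 : Tendsto g (nhdsWithin 0 (Set.Ioi 0)) (nhds 0) := by
    have h := (hlogB0.neg).div_atTop hlogs0
    exact h.congr fun s => (hg s).symm
  -- limit at ∞
  have htop : Tendsto t atTop atTop := by
    refine tendsto_atTop_mono' _ ?_ (tendsto_atTop_add_const_right _ 1 tendsto_id)
    filter_upwards [eventually_gt_atTop (0:ℝ)] with s hs
    exact (hts1 s hs).le
  have hlogt_top : Tendsto (fun s => Real.log (t s)) atTop atTop :=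
    Real.tendsto_log_atTop.comp htop
  have hbound : ∀ᶠ s : ℝ in atTop,
      4 - 4 * Real.log 2 / Real.log (t s) ≤ g s ∧
      g s ≤ 4 + 4 * Real.log 2 / Real.log (t s) := by
    filter_upwards [eventually_ge_atTop (13:ℝ)] with s hs13
    have hs0 : (0:ℝ) < s := by linarith
    have h1 := ht s hs0
    have h2 := hlow s hs0
    have h3 := hhigh s hs0
    have htp := htpos s hs0
    have hts := hts1 s hs0
    have hn := hnum s hs0
    have hd := hden s hs0
    have h4s : 4 / s ≤ 4 / 13 := by
      rw [div_le_div_iff₀ hs0 (by norm_num : (0:ℝ) < 13)]; linarith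
    have hinvt : 1 / t s < 1 / 14 := by
      rw [div_lt_div_iff₀ htp (by norm_num : (0:ℝ) < 14)]; linarith
    have hcs : 0 < c / s := div_pos hc hs0
    have hinvpos : 0 < 1 / t s := by positivity
    have hnum_lb : 1 / 2 ≤ t s - s - 1 := by linarith
    have hnum_ub : t s - s - 1 ≤ 2 := by linarith
    have ht_ub : t s < s + 3 := by linarith
    have hden_lb : t s ^ 2 / 2 ≤ -1 + (1 + s) * t s := by
      nlinarith [mul_nonneg (by linarith : (0:ℝ) ≤ s - t s + 3) htp.le,
        mul_nonneg (by linarith : (0:ℝ) ≤ t s - 14) htp.le]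
    have hden_ub : -1 + (1 + s) * t s ≤ 2 * t s ^ 2 := by
      nlinarith [mul_nonneg (by linarith : (0:ℝ) ≤ t s - 1 - s) htp.le, sq_nonneg (t s)]
    have hlt : 0 < Real.log (t s) := Real.log_pos h1
    have hl2 : (0:ℝ) < Real.log 2 := Real.log_pos (by norm_num)
    have hlogden_lb : 2 * Real.log (t s) - Real.log 2 ≤ Real.log (-1 + (1 + s) * t s) := by
      have hlog1 := log_mono_aux (by positivity : (0:ℝ) < t s ^ 2 / 2) hden_lb
      have he : Real.log (t s ^ 2 / 2) = 2 * Real.log (t s) - Real.log 2 := by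
        rw [Real.log_div (by positivity) (by norm_num), Real.log_pow]
        push_cast; ring
      linarith
    have hlogden_ub : Real.log (-1 + (1 + s) * t s) ≤ 2 * Real.log (t s) + Real.log 2 := by
      have hlog1 := log_mono_aux hd hden_ub
      have he : Real.log (2 * t s ^ 2) = 2 * Real.log (t s) + Real.log 2 := by
        rw [Real.log_mul (by norm_num) (by positivity), Real.log_pow]
        push_cast; ring
      linarith
    have hlognum_lb : -Real.log 2 ≤ Real.log (t s - s - 1) := by
      have h := log_mono_aux (by norm_num : (0:ℝ) < 1/2) hnum_lb
      have he : Real.log (1/2 : ℝ) = -Real.log 2 := by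
        rw [one_div, Real.log_inv]
      linarith
    have hlognum_ub : Real.log (t s - s - 1) ≤ Real.log 2 := log_mono_aux hn hnum_ub
    have hgeq : g s = (Real.log (-1 + (1 + s) * t s) - Real.log (t s - s - 1)) /
        (Real.log (t s) / 2) := by
      rw [hg s, hB s, Real.log_sqrt htp.le, Real.log_div hn.ne' hd.ne', neg_sub]
    constructor
    · rw [hgeq, le_div_iff₀ (by linarith : (0:ℝ) < Real.log (t s) / 2)]
      have hexp : (4 - 4 * Real.log 2 / Real.log (t s)) * (Real.log (t s) / 2)
          = 2 * Real.log (t s) - 2 * Real.log 2 := by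
        field_simp
        ring
      rw [hexp]
      linarith
    · rw [hgeq, div_le_iff₀ (by linarith : (0:ℝ) < Real.log (t s) / 2)]
      have hexp : (4 + 4 * Real.log 2 / Real.log (t s)) * (Real.log (t s) / 2)
          = 2 * Real.log (t s) + 2 * Real.log 2 := by
        field_simp
        ring
      rw [hexp]
      linarith
  have hg4 : Tendsto g atTop (nhds 4) := by
    have hq : Tendsto (fun s => 4 * Real.log 2 / Real.log (t s)) atTop (nhds 0) :=
      Tendsto.div_atTop tendsto_const_nhds hlogt_top
    have hlo : Tendsto (fun s => 4 - 4 * Real.log 2 / Real.log (t s)) atTop (nhds 4) := by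
      have h2 : Tendsto (fun s => (4:ℝ) - 4 * Real.log 2 / Real.log (t s)) atTop
          (nhds (4 - 0)) := Tendsto.sub tendsto_const_nhds hq
      simpa using h2
    have hhi : Tendsto (fun s => 4 + 4 * Real.log 2 / Real.log (t s)) atTop (nhds 4) := by
      have h2 : Tendsto (fun s => (4:ℝ) + 4 * Real.log 2 / Real.log (t s)) atTop
          (nhds (4 + 0)) := Tendsto.add tendsto_const_nhds hq
      simpa using h2
    exact tendsto_of_tendsto_of_tendsto_of_le_of_le' hlo hhi
      (hbound.mono fun s h => h.1) (hbound.mono fun s h => h.2)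
  -- continuity of g on Ioi 0
  have hsq1 : ∀ x : ℝ, 0 < x → 1 < Real.sqrt (t x) := by
    intro x hx
    have h := Real.sqrt_lt_sqrt zero_le_one (ht x hx)
    rwa [Real.sqrt_one] at h
  have hgc : ContinuousOn g (Set.Ioi (0:ℝ)) := by
    have hBc : ContinuousOn B (Set.Ioi (0:ℝ)) := by
      have h1 : ContinuousOn (fun s : ℝ => (t s - s - 1) / (-1 + (1 + s) * t s))
          (Set.Ioi 0) := by
        apply ContinuousOn.div
        · exact (htcont.sub continuousOn_id).sub continuousOn_const
        · exact continuousOn_const.add ((continuousOn_const.add continuousOn_id).mul htcont)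
        · intro x hx; exact (hden x hx).ne'
      exact h1.congr fun s hs => hB s
    have hgl : ContinuousOn (fun s => -Real.log (B s) / Real.log (Real.sqrt (t s)))
        (Set.Ioi (0:ℝ)) := by
      apply ContinuousOn.div
      · exact (hBc.log fun x hx => (hBpos x hx).ne').neg
      · exact ContinuousOn.log (Real.continuous_sqrt.comp_continuousOn htcont)
          fun x hx => by
            have := hsq1 x hx
            linarith
      · intro x hx
        exact (Real.log_pos (hsq1 x hx)).ne'
    exact hgl.congr fun s hs => hg s
  refine ⟨hBpos, hg0, hg4, ?_⟩
  intro y hy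
  obtain ⟨hy0, hy4⟩ := hy
  have h1 : ∀ᶠ s in nhdsWithin (0:ℝ) (Set.Ioi 0), g s < y :=
    hg0.eventually (eventually_lt_nhds hy0)
  obtain ⟨s₁, hgs₁, hs₁⟩ := (h1.and self_mem_nhdsWithin).exists
  have h2 : ∀ᶠ s in atTop, y < g s := hg4.eventually (eventually_gt_nhds hy4)
  obtain ⟨s₂, hgs₂, hs₂⟩ := (h2.and (eventually_gt_atTop s₁)).exists
  have hs₁0 : (0:ℝ) < s₁ := hs₁
  have hsub : Set.Icc s₁ s₂ ⊆ Set.Ioi (0:ℝ) := fun x hx => lt_of_lt_of_le hs₁0 hx.1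
  have hivt := intermediate_value_Ioo hs₂.le (hgc.mono hsub)
  have hy' : y ∈ Set.Ioo (g s₁) (g s₂) := ⟨hgs₁, hgs₂⟩
  obtain ⟨x, hx, hgx⟩ := hivt hy'
  exact ⟨x, hsub (Set.Ioo_subset_Icc_self hx), hgx⟩
end
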